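/- arXiv:2202.06644 — 5 statements merged into one kernel-verified Lean document; each statement's English description precedes it below -/
import Mathlib

section
/- A network N on X (with |X| ≥ 2) is forest-based if and only if it is based on the trivial forest on X, i.e., the phylogenetic forest whose components are the single-vertex trees {x} for x ∈ X. Equivalently, N is forest-based if and only if N contains a collection of |X| vertex-disjoint directed paths (some possibly of length 0), one ending at each leaf, that together span all vertices of N, such that no arc of N joins two non-consecutive vertices of the same path. -/
open Classical

noncomputable def outdeg {V : Type*} (A : V → V → Prop) (v : V) : ℕ := {u | A v u}.ncard
noncomputable def indeg {V : Type*} (A : V → V → Prop) (v : V) : ℕ := {u | A u v}.ncard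

def Acyclic {V : Type*} (A : V → V → Prop) : Prop := ∀ v : V, ¬ Relation.TransGen A v v

def undirConn {V : Type*} (A : V → V → Prop) : Prop :=
  ∀ u v : V, Relation.ReflTransGen (fun a b => A a b ∨ A b a) u v

/-- A (multiply rooted) network with leaf set `X`: a semi-binary, connected DAG in which
the leaves (vertices of outdegree 0) are exactly `X` and every root has outdegree ≥ 2. -/
structure IsNetwork {V : Type*} (A : V → V → Prop) (X : Set V) : Prop where
  acyclic : Acyclic A
  conn : undirConn A
  leaves : ∀ v, outdeg A v = 0 ↔ v ∈ X
  roots2 : ∀ v, indeg A v = 0 → 2 ≤ outdeg A v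
  semibinary : ∀ v, 2 ≤ indeg A v → indeg A v = 2 ∧ outdeg A v = 1

/-- A (rooted) forest: every vertex has indegree at most one, and there are no directed cycles. -/
def IsForest {V : Type*} (F : V → V → Prop) : Prop := (∀ v, indeg F v ≤ 1) ∧ Acyclic F

/-- Two vertices lie in the same tree (connected component) of the forest `F`. -/
def sameTree {V : Type*} (F : V → V → Prop) (u v : V) : Prop :=
  Relation.ReflTransGen (fun a b => F a b ∨ F b a) u v

/-- `F` is a subdivision forest for the network `(V,A)` with leaf set `X`: a spanning
subforest with the same leaf set, all non-forest arcs joining distinct trees of `F`. -/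
def SubdivForest {V : Type*} (A F : V → V → Prop) (X : Set V) : Prop :=
  (∀ u v, F u v → A u v) ∧ IsForest F ∧
    (∀ v, outdeg F v = 0 ↔ v ∈ X) ∧
    (∀ u v, A u v → ¬ F u v → ¬ sameTree F u v)

/-- A network is forest-based if it admits a subdivision forest. -/
def ForestBased {V : Type*} (A : V → V → Prop) (X : Set V) : Prop :=
  ∃ F : V → V → Prop, SubdivForest A F X

/-- a network is forest-based iff it is based on the trivial forest, i.e.
iff it admits a subdivision forest which is a disjoint union of directed paths
(every vertex of outdegree ≤ 1 in the forest), one ending at each leaf, spanning all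
vertices, with no arc of `N` joining two non-consecutive vertices of the same path. -/
theorem stmt2 {V : Type*} [Fintype V] (A : V → V → Prop) (X : Set V)
    (hnet : IsNetwork A X) (hX : 2 ≤ X.ncard) :
    ForestBased A X ↔
      ∃ F : V → V → Prop, SubdivForest A F X ∧ ∀ v, outdeg F v ≤ 1 := by
  constructor
  · rintro ⟨F, hFA, hForest, hleaf, hcross⟩
    classical
    set F' : V → V → Prop := fun u v => ∃ h : ∃ w, F u w, v = h.choose with hF'def
    have hF'F : ∀ u v, F' u v → F u v := by
      rintro u v ⟨h, rfl⟩; exact h.choose_spec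
    have hfun : ∀ u a b, F' u a → F' u b → a = b := by
      rintro u a b ⟨h, rfl⟩ ⟨h', rfl⟩; rfl
    have hinjF : ∀ a b v, F a v → F b v → a = b := by
      intro a b v ha hb
      exact (Set.ncard_le_one_iff (Set.toFinite _)).mp (hForest.1 v) ha hb
    have hnorm : ∀ u v : V, sameTree F' u v →
        Relation.ReflTransGen F' u v ∨ Relation.ReflTransGen F' v u := by
      intro u v h
      induction h with
      | refl => exact Or.inl .refl
      | tail hub hstep ih =>
        rename_i b c
        rcases hstep with hbc | hcb
        · rcases ih with h1 | h1
          · exact Or.inl (h1.tail hbc)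
          · rcases h1.cases_head with rfl | ⟨d, hbd, hdu⟩
            · exact Or.inl (Relation.ReflTransGen.single hbc)
            · rw [hfun b d c hbd hbc] at hdu
              exact Or.inr hdu
        · rcases ih with h1 | h1
          · rcases h1.cases_tail with rfl | ⟨d, hud, hdb⟩
            · exact Or.inr (Relation.ReflTransGen.single hcb)
            · rw [hinjF d c b (hF'F _ _ hdb) (hF'F _ _ hcb)] at hud
              exact Or.inl hud
          · exact Or.inr (h1.head hcb)
    refine ⟨F', ⟨fun u v h => hFA u v (hF'F u v h), ⟨?_, ?_⟩, ?_, ?_⟩, ?_⟩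
    · intro v
      exact le_trans (Set.ncard_le_ncard (fun u hu => hF'F u v hu) (Set.toFinite _))
        (hForest.1 v)
    · intro v hv
      exact hForest.2 v (Relation.TransGen.mono hF'F _ _ hv)
    · intro v
      rw [← hleaf v]
      unfold outdeg
      rw [Set.ncard_eq_zero (Set.toFinite _), Set.ncard_eq_zero (Set.toFinite _)]
      constructor
      · intro h
        ext w
        simp only [Set.mem_setOf_eq, Set.mem_empty_iff_false, iff_false]
        intro hw
        have hne : (∃ w, F v w) := ⟨w, hw⟩
        have : F' v hne.choose := ⟨hne, rfl⟩
        have := Set.eq_empty_iff_forall_notMem.mp h hne.choose this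
        exact this
      · intro h
        ext w
        simp only [Set.mem_setOf_eq, Set.mem_empty_iff_false, iff_false]
        intro hw
        exact Set.eq_empty_iff_forall_notMem.mp h _ (hF'F v w hw)
    · intro u v hA hnF' hsame
      by_cases hF : F u v
      · rcases hnorm u v hsame with h1 | h1
        · rcases h1.cases_tail with rfl | ⟨d, hud, hdv⟩
          · exact hForest.2 _ (Relation.TransGen.single hF)
          · have hdu : d = u := hinjF d u v (hF'F _ _ hdv) hF
            rw [hdu] at hdv
            exact hnF' hdv
        · exact hForest.2 u (Relation.TransGen.head' hF (Relation.ReflTransGen.mono hF'F _ _ h1))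
      · exact hcross u v hA hF
          (Relation.ReflTransGen.mono (fun a b h => h.imp (hF'F a b) (hF'F b a)) _ _ hsame)
    · intro v
      unfold outdeg
      rw [Set.ncard_le_one_iff (Set.toFinite _)]
      intro a b ha hb
      exact hfun v a b ha hb
  · rintro ⟨F, h, _⟩
    exact ⟨F, h⟩
end

section
/- Let N be a binary phylogenetic network on X with |X| ≥ 2 (i.e., N has a single root). If N is forest-based, then N is tree-based. -/
open Classical

/-- Binary: hybrid vertices have indegree 2 and outdegree 1; roots and non-leaf tree
vertices have outdegree 2. -/
def IsBinary {V : Type*} (A : V → V → Prop) : Prop :=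
  ∀ v, (2 ≤ indeg A v → indeg A v = 2 ∧ outdeg A v = 1) ∧
    (indeg A v = 0 → outdeg A v = 2) ∧
    (indeg A v = 1 → outdeg A v = 0 ∨ outdeg A v = 2)

/-- Tree-based: there is a spanning subtree with the same leaf set. -/
def TreeBased {V : Type*} (A : V → V → Prop) (X : Set V) : Prop :=
  ∃ T : V → V → Prop, (∀ u v, T u v → A u v) ∧ IsForest T ∧ undirConn T ∧
    (∀ v, outdeg T v = 0 ↔ v ∈ X)

/-- a binary phylogenetic network (single root) that is forest-based
is tree-based. -/
theorem stmt3 {V : Type*} [Fintype V] (A : V → V → Prop) (X : Set V)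
    (hnet : IsNetwork A X) (hbin : IsBinary A)
    (hroot : {v | indeg A v = 0}.ncard = 1) (hX : 2 ≤ X.ncard)
    (hfb : ForestBased A X) : TreeBased A X := by
  classical
  obtain ⟨F, hFA, ⟨hind, hacF⟩, hleafF, hcross⟩ := hfb
  obtain ⟨ρ, hρ⟩ := Set.ncard_eq_one.mp hroot
  have huniq : ∀ v, indeg A v = 0 → v = ρ := by
    intro v hv
    have : v ∈ ({ρ} : Set V) := hρ ▸ hv
    exact this
  haveI : IsTrans V (Relation.TransGen A) := ⟨fun _ _ _ => Relation.TransGen.trans⟩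
  haveI : IsIrrefl V (Relation.TransGen A) := ⟨hnet.acyclic⟩
  have hwf : WellFounded (Relation.TransGen A) :=
    Finite.wellFounded_of_trans_of_irrefl _
  have hzero : ∀ (s : Set V), s.ncard = 0 → s = ∅ := fun s hs =>
    (Set.ncard_eq_zero s.toFinite).mp hs
  -- every root of the forest other than ρ has an incoming arc in A
  have hpick : ∀ r, indeg F r = 0 ∧ r ≠ ρ → ∃ u, A u r := by
    rintro r ⟨h0, hne⟩
    by_contra h
    push_neg at h
    have hemp : {u | A u r} = ∅ := Set.eq_empty_iff_forall_notMem.mpr h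
    have : indeg A r = 0 := by simp [indeg, hemp]
    exact hne (huniq r this)
  set pick : V → V := fun v =>
    if h : indeg F v = 0 ∧ v ≠ ρ then (hpick v h).choose else v with hpickdef
  have hpickA : ∀ v (h : indeg F v = 0 ∧ v ≠ ρ), A (pick v) v := by
    intro v h
    simp only [hpickdef, dif_pos h]
    exact (hpick v h).choose_spec
  set T : V → V → Prop := fun u v =>
    F u v ∨ (indeg F v = 0 ∧ v ≠ ρ ∧ u = pick v) with hTdef
  have hTA : ∀ u v, T u v → A u v := by
    rintro u v (h | ⟨h0, hne, rfl⟩)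
    · exact hFA u v h
    · exact hpickA v ⟨h0, hne⟩
  -- indegree ≤ 1
  have hTind : ∀ v, indeg T v ≤ 1 := by
    intro v
    by_cases hc : indeg F v = 0 ∧ v ≠ ρ
    · have hFemp : {u | F u v} = ∅ := hzero _ hc.1
      have : {u | T u v} = {pick v} := by
        ext u
        constructor
        · rintro (h | ⟨_, _, rfl⟩)
          · exact absurd h (by
              have := Set.eq_empty_iff_forall_notMem.mp hFemp u
              exact this)
          · rfl
        · rintro rfl
          exact Or.inr ⟨hc.1, hc.2, rfl⟩
      simp [indeg, this]
    · have : {u | T u v} = {u | F u v} := by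
        ext u
        constructor
        · rintro (h | ⟨h0, hne, _⟩)
          · exact h
          · exact absurd ⟨h0, hne⟩ hc
        · exact fun h => Or.inl h
      rw [indeg, this]
      exact hind v
  -- acyclicity
  have hTac : Acyclic T := by
    intro v hv
    exact hnet.acyclic v (Relation.TransGen.mono (fun a b h => hTA a b h) _ _ hv)
  -- leaves
  have hTleaf : ∀ v, outdeg T v = 0 ↔ v ∈ X := by
    intro v
    constructor
    · intro h
      have hemp : {w | T v w} = ∅ := hzero _ h
      have : {w | F v w} = ∅ := by
        apply Set.eq_empty_iff_forall_notMem.mpr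
        intro w hw
        exact Set.eq_empty_iff_forall_notMem.mp hemp w (Or.inl hw)
      exact (hleafF v).mp (by simp [outdeg, this])
    · intro h
      have hA0 : outdeg A v = 0 := (hnet.leaves v).mpr h
      have hAemp : {w | A v w} = ∅ := hzero _ hA0
      have : {w | T v w} = ∅ := by
        apply Set.eq_empty_iff_forall_notMem.mpr
        intro w hw
        exact Set.eq_empty_iff_forall_notMem.mp hAemp w (hTA v w hw)
      simp [outdeg, this]
  -- symmetrized relation
  set S : V → V → Prop := fun a b => T a b ∨ T b a with hSdef
  have hSsymm : Symmetric S := fun a b h => Or.symm h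
  have hRsym : ∀ {a b}, Relation.ReflTransGen S a b → Relation.ReflTransGen S b a :=
    fun h => (@Relation.ReflTransGen.stdSymm _ S ⟨fun a b h => hSsymm h⟩).symm _ _ h
  -- every vertex has a forest root above it
  have hrootOf : ∀ v, ∃ r, indeg F r = 0 ∧ Relation.ReflTransGen F r v := by
    intro v
    induction v using hwf.induction with
    | _ v ih =>
      by_cases h0 : indeg F v = 0
      · exact ⟨v, h0, Relation.ReflTransGen.refl⟩
      · obtain ⟨u, hu⟩ := Set.nonempty_of_ncard_ne_zero h0
        obtain ⟨r, hr0, hrp⟩ := ih u (Relation.TransGen.single (hFA u v hu))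
        exact ⟨r, hr0, hrp.tail hu⟩
  -- connectivity to ρ
  have hconn : ∀ v, Relation.ReflTransGen S v ρ := by
    intro v
    induction v using hwf.induction with
    | _ v ih =>
      obtain ⟨r, hr0, hrp⟩ := hrootOf v
      have hvr : Relation.ReflTransGen S v r := by
        have hrv : Relation.ReflTransGen S r v :=
          Relation.ReflTransGen.mono (fun a b h => Or.inl (Or.inl h)) _ _ hrp
        exact hRsym hrv
      by_cases hre : r = ρ
      · exact hre ▸ hvr
      · have hT : T (pick r) r := Or.inr ⟨hr0, hre, rfl⟩
        have hrpick : Relation.ReflTransGen S r (pick r) :=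
          Relation.ReflTransGen.single (Or.inr hT)
        have hlt : Relation.TransGen A (pick r) v :=
          Relation.TransGen.head' (hpickA r ⟨hr0, hre⟩)
            (Relation.ReflTransGen.mono (fun a b h => hFA a b h) _ _ hrp)
        exact (hvr.trans hrpick).trans (ih (pick r) hlt)
  refine ⟨T, hTA, ⟨hTind, hTac⟩, ?_, hTleaf⟩
  intro u v
  exact (hconn u).trans (hRsym (hconn v))
end

section
/- Let N be an m-rooted network (m ≥ 2) that is proper forest-based with proper base forest F. Define Γ_F(N) as the undirected graph on vertex set RH(N) = R(N) ∪ H(N) with edges {u, v} whenever u and v belong to different trees of (the embedding of) F. Then Γ_F(N) is a loop-free omni-extension of Γ(N). -/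
open Classical

/-- `g = γ_v`: `g` is the lowest ancestor of `v` lying in `RH(N) = R(N) ∪ H(N)`
(the vertices of indegree ≠ 1), i.e. the directed path from `g` to `v` passes only
through tree vertices (indegree 1) after `g`. -/
def isGamma {V : Type*} (A : V → V → Prop) (g v : V) : Prop :=
  indeg A g ≠ 1 ∧ Relation.ReflTransGen (fun a b => A a b ∧ indeg A b = 1) g v

/-- The graph `Γ(N)` on `RH(N)`: `u` and `v` are joined if some hybrid vertex has
parents `u'`, `v'` with `γ_{u'} = u` and `γ_{v'} = v`. -/
def GammaN {V : Type*} (A : V → V → Prop) (u v : V) : Prop :=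
  ∃ h u' v', 2 ≤ indeg A h ∧ A u' h ∧ A v' h ∧ u' ≠ v' ∧
    isGamma A u u' ∧ isGamma A v v'

/-- An omnian: a non-leaf vertex all of whose children are hybrid vertices. -/
def Omnian {V : Type*} (A : V → V → Prop) (v : V) : Prop :=
  outdeg A v ≠ 0 ∧ ∀ c, A v c → 2 ≤ indeg A c

/-- `E` is an omni-extension of `Γ(N)`: a supergraph of `Γ(N)` on the vertex set
`RH(N)` such that every omnian `v` has a child `h` with `{γ_u, h}` an edge of `E`,
where `u` is the other parent of `h`. -/
def OmniExt {V : Type*} (A : V → V → Prop) (E : V → V → Prop) : Prop :=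
  Symmetric E ∧ (∀ u v, E u v → indeg A u ≠ 1 ∧ indeg A v ≠ 1) ∧
    (∀ u v, GammaN A u v → E u v) ∧
    ∀ v, Omnian A v → ∃ h u g, A v h ∧ 2 ≤ indeg A h ∧ A u h ∧ u ≠ v ∧
      isGamma A g u ∧ E g h

/-- Proper forest-based: forest-based with a base forest having exactly as many
component trees (roots of the subdivision forest) as `N` has roots. -/
def ProperFB {V : Type*} (A : V → V → Prop) (X : Set V) : Prop :=
  ∃ F : V → V → Prop, SubdivForest A F X ∧
    {v | indeg F v = 0}.ncard = {v | indeg A v = 0}.ncard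

section Helpers

variable {V : Type*} [Fintype V] {A F : V → V → Prop} {X : Set V}

lemma sameTree_symm : Symmetric (sameTree F) :=
  haveI : Std.Symm (fun a b : V => F a b ∨ F b a) := ⟨fun _ _ h => h.symm⟩
  fun a b (h : Relation.ReflTransGen (fun a b : V => F a b ∨ F b a) a b) =>
    (Std.Symm.symm a b h : Relation.ReflTransGen (fun a b : V => F a b ∨ F b a) b a)

lemma roots_eq (hF : SubdivForest A F X) {m : ℕ}
    (hroots : {v | indeg A v = 0}.ncard = m)
    (hproper : {v | indeg F v = 0}.ncard = m) :
    {v | indeg F v = 0} = {v | indeg A v = 0} := by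
  have hsub : {v | indeg A v = 0} ⊆ {v | indeg F v = 0} := by
    intro v hv
    have hvA : {u | A u v} = ∅ := (Set.ncard_eq_zero (Set.toFinite _)).mp hv
    have : {u | F u v} = ∅ := by
      apply Set.eq_empty_of_subset_empty
      rw [← hvA]; exact fun u hu => hF.1 u v hu
    simpa [indeg] using (Set.ncard_eq_zero (Set.toFinite _)).mpr this
  exact (Set.eq_of_subset_of_ncard_le hsub (by rw [hroots, hproper])
    (Set.toFinite _)).symm

/-- If `b` is not a root of `A`, then `b` has a unique `F`-parent. -/
lemma fparent (hF : SubdivForest A F X)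
    (hre : {v | indeg F v = 0} = {v | indeg A v = 0}) {b : V}
    (hb : indeg A b ≠ 0) : ∃ w, F w b ∧ ∀ x, F x b → x = w := by
  have h0 : indeg F b ≠ 0 := fun h => hb (hre ▸ h : b ∈ {v | indeg A v = 0})
  have h1 : indeg F b = 1 := le_antisymm (hF.2.1.1 b) (Nat.one_le_iff_ne_zero.mpr h0)
  obtain ⟨w, hw⟩ := Set.ncard_eq_one.mp h1
  refine ⟨w, ?_, fun x hx => ?_⟩
  · have : w ∈ {u | F u b} := hw ▸ rfl
    exact this
  · have : x ∈ ({w} : Set V) := hw ▸ hx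
    simpa using this

/-- An arc into a tree vertex belongs to the forest. -/
lemma tree_arc (hF : SubdivForest A F X)
    (hre : {v | indeg F v = 0} = {v | indeg A v = 0}) {a b : V}
    (hab : A a b) (hb : indeg A b = 1) : F a b := by
  obtain ⟨w, hw, huniq⟩ := fparent hF hre (b := b) (by omega)
  obtain ⟨p, hp⟩ := Set.ncard_eq_one.mp hb
  have hwp : w = p := by have : w ∈ ({p} : Set V) := hp ▸ hF.1 w b hw; simpa using this
  have hap : a = p := by have : a ∈ ({p} : Set V) := hp ▸ hab; simpa using this
  rwa [hap, ← hwp]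

lemma gamma_sameTree (hF : SubdivForest A F X)
    (hre : {v | indeg F v = 0} = {v | indeg A v = 0}) {g u : V}
    (h : isGamma A g u) : sameTree F g u := by
  obtain ⟨-, hpath⟩ := h
  induction hpath with
  | refl => exact Relation.ReflTransGen.refl
  | @tail b c _ hbc ih => exact ih.tail (Or.inl (tree_arc hF hre hbc.1 hbc.2))

lemma exists_gamma (hnet : IsNetwork A X) (u : V) : ∃ g, isGamma A g u := by
  have hirr : IsIrrefl V (Relation.TransGen A) := ⟨hnet.acyclic⟩
  have htr : IsTrans V (Relation.TransGen A) := ⟨fun _ _ _ => Relation.TransGen.trans⟩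
  have hwfT : WellFounded (Relation.TransGen A) :=
    Finite.wellFounded_of_trans_of_irrefl _
  have hwf : WellFounded A := Subrelation.wf (fun h => Relation.TransGen.single h) hwfT
  refine hwf.induction (C := fun u => ∃ g, isGamma A g u) u (fun u ih => ?_)
  by_cases h1 : indeg A u = 1
  · obtain ⟨p, hp⟩ := Set.ncard_eq_one.mp h1
    have hpu : A p u := by have : p ∈ {w | A w u} := hp ▸ rfl; exact this
    obtain ⟨g, hg⟩ := ih p hpu
    exact ⟨g, hg.1, hg.2.tail ⟨hpu, h1⟩⟩
  · exact ⟨u, h1, Relation.ReflTransGen.refl⟩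

/-- The parents of a hybrid vertex with two known distinct parents are exactly those two. -/
lemma parents_eq {h u' v' : V} (h2 : indeg A h = 2) (hu : A u' h) (hv : A v' h)
    (hne : u' ≠ v') : ∀ w, A w h → w = u' ∨ w = v' := by
  have hsub : ({u', v'} : Set V) ⊆ {w | A w h} := by
    rintro x (rfl | rfl) <;> simpa
  have hcard : ({u', v'} : Set V).ncard = 2 := Set.ncard_pair hne
  have heq : ({u', v'} : Set V) = {w | A w h} :=
    Set.eq_of_subset_of_ncard_le hsub (by rw [hcard]; exact h2.le) (Set.toFinite _)
  intro w hw
  have : w ∈ ({u', v'} : Set V) := heq ▸ hw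
  simpa using this

end Helpers

/-- if `N` is proper forest-based with proper base forest given by the
subdivision forest `F`, then the graph `Γ_F(N)` on `RH(N)` joining vertices lying in
different trees of `F` is a loop-free omni-extension of `Γ(N)`. -/
theorem stmt12 {V : Type*} [Fintype V] (A : V → V → Prop) (X : Set V) (m : ℕ)
    (hm : 2 ≤ m) (hnet : IsNetwork A X) (hroots : {v | indeg A v = 0}.ncard = m)
    (F : V → V → Prop) (hF : SubdivForest A F X)
    (hproper : {v | indeg F v = 0}.ncard = m) :
    OmniExt A (fun u v => indeg A u ≠ 1 ∧ indeg A v ≠ 1 ∧ ¬ sameTree F u v) ∧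
      ∀ u, ¬ (indeg A u ≠ 1 ∧ indeg A u ≠ 1 ∧ ¬ sameTree F u u) := by
  have hre : {v | indeg F v = 0} = {v | indeg A v = 0} := roots_eq hF hroots hproper
  constructor
  · refine ⟨?_, ?_, ?_, ?_⟩
    · rintro u v ⟨h1, h2, h3⟩
      exact ⟨h2, h1, fun hs => h3 (sameTree_symm hs)⟩
    · rintro u v ⟨h1, h2, _⟩
      exact ⟨h1, h2⟩
    · rintro u v ⟨h, u', v', hh2, hu'h, hv'h, hne, hgu, hgv⟩
      have h2 : indeg A h = 2 := (hnet.semibinary h hh2).1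
      obtain ⟨w, hw, huniq⟩ := fparent hF hre (b := h) (by omega)
      have su : sameTree F u u' := gamma_sameTree hF hre hgu
      have sv : sameTree F v v' := gamma_sameTree hF hre hgv
      refine ⟨hgu.1, hgv.1, fun hs => ?_⟩
      have huv' : sameTree F u' v' := (sameTree_symm su).trans (hs.trans sv)
      rcases parents_eq h2 hu'h hv'h hne w (hF.1 w h hw) with rfl | rfl
      · have hnF : ¬ F v' h := fun hf => hne (huniq v' hf).symm
        exact hF.2.2.2 v' h hv'h hnF
          ((sameTree_symm huv').trans (Relation.ReflTransGen.single (Or.inl hw)))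
      · have hnF : ¬ F u' h := fun hf => hne (huniq u' hf)
        exact hF.2.2.2 u' h hu'h hnF
          (huv'.trans (Relation.ReflTransGen.single (Or.inl hw)))
    · rintro v ⟨hout, hchild⟩
      have hvX : v ∉ X := fun hx => hout ((hnet.leaves v).mpr hx)
      have houtF : outdeg F v ≠ 0 := fun h0 => hvX ((hF.2.2.1 v).mp h0)
      obtain ⟨h, hFvh⟩ : ∃ h, F v h := by
        have := Set.nonempty_of_ncard_ne_zero houtF
        exact this
      have hAvh : A v h := hF.1 v h hFvh
      have hh2 : 2 ≤ indeg A h := hchild h hAvh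
      have h2 : indeg A h = 2 := (hnet.semibinary h hh2).1
      obtain ⟨wp, hwp, hwuniq⟩ := fparent hF hre (b := h) (by omega)
      have hvwp : v = wp := hwuniq v hFvh
      obtain ⟨a, b, hab, hs⟩ := Set.ncard_eq_two.mp h2
      have hvmem : v = a ∨ v = b := by
        have : v ∈ ({a, b} : Set V) := hs ▸ hAvh
        simpa using this
      -- pick the other parent u of h
      obtain ⟨u, hAuh, hune⟩ : ∃ u, A u h ∧ u ≠ v := by
        rcases hvmem with rfl | rfl
        · refine ⟨b, ?_, hab.symm⟩
          have : b ∈ {u | A u h} := by rw [hs]; simp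
          exact this
        · refine ⟨a, ?_, hab⟩
          have : a ∈ {u | A u h} := by rw [hs]; simp
          exact this
      have hnFuh : ¬ F u h := fun hf => hune ((hwuniq u hf).trans hvwp.symm)
      have hnst : ¬ sameTree F u h := hF.2.2.2 u h hAuh hnFuh
      obtain ⟨g, hg⟩ := exists_gamma hnet u
      have sgu : sameTree F g u := gamma_sameTree hF hre hg
      refine ⟨h, u, g, hAvh, hh2, hAuh, hune, hg, hg.1, by omega, fun hgh => ?_⟩
      exact hnst ((sameTree_symm sgu).trans hgh)
  · rintro u ⟨_, _, h3⟩
    exact h3 Relation.ReflTransGen.refl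
end

section
/- Let N be an m-rooted network on X with m ≥ 2, and let S = {s₁, …, s_m} be a set of m colors. Then N is proper forest-based if and only if there exists an omni-extension Γ'(N) of Γ(N) and a proper vertex coloring σ: RH(N) → S of Γ'(N) such that (C1) the restriction of σ to the roots R(N) is a bijection onto S, and (C2) for all roots u and hybrid vertices v with σ(u) = σ(v), there exists a directed path P in N from u to v such that σ(w) = σ(u) for every hybrid vertex w on P. -/
open Classical

section Helpers
variable {V : Type*} [Fintype V] {A : V → V → Prop}

lemma indeg_ne_zero_iff (v : V) : indeg A v ≠ 0 ↔ ∃ u, A u v := by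
  rw [indeg, Ne, Set.ncard_eq_zero (Set.toFinite _), ← Ne, ← Set.nonempty_iff_ne_empty]
  exact Iff.rfl

lemma indeg_pos_of_arc {u v : V} (h : A u v) : indeg A v ≠ 0 :=
  (indeg_ne_zero_iff v).mpr ⟨u, h⟩

lemma outdeg_ne_zero_iff (v : V) : outdeg A v ≠ 0 ↔ ∃ u, A v u := by
  rw [outdeg, Ne, Set.ncard_eq_zero (Set.toFinite _), ← Ne, ← Set.nonempty_iff_ne_empty]
  exact Iff.rfl

lemma le_one_unique {S : Set V} (h : S.ncard ≤ 1) {a b : V} (ha : a ∈ S) (hb : b ∈ S) : a = b := by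
  by_contra hne
  have hsub : ({a, b} : Set V) ⊆ S := by
    intro x hx; rcases hx with rfl | hx
    · exact ha
    · simp at hx; exact hx ▸ hb
  have := Set.ncard_le_ncard hsub (Set.toFinite _)
  rw [Set.ncard_pair hne] at this; omega

lemma parent_unique {v : V} (h : indeg A v = 1) : ∃ u, A u v ∧ ∀ w, A w v → w = u := by
  have h1 : indeg A v ≠ 0 := by omega
  obtain ⟨u, hu⟩ := (indeg_ne_zero_iff v).mp h1
  exact ⟨u, hu, fun w hw => le_one_unique h.le hw hu⟩

lemma parents_pair {v p q : V} (h2 : indeg A v = 2) (hp : A p v) (hq : A q v) (hpq : p ≠ q) :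
    ∀ r, A r v → r = p ∨ r = q := by
  have hsub : ({p, q} : Set V) ⊆ {u | A u v} := by
    intro x hx; rcases hx with rfl | hx
    · exact hp
    · simp at hx; exact hx ▸ hq
  have heq : ({p, q} : Set V) = {u | A u v} :=
    Set.eq_of_subset_of_ncard_le hsub (by rw [Set.ncard_pair hpq]; exact h2.le) (Set.toFinite _)
  intro r hr
  have : r ∈ ({p, q} : Set V) := heq ▸ hr
  simpa using this

lemma exists_other_parent {v p : V} (h2 : 2 ≤ indeg A v) (hp : A p v) :
    ∃ q, A q v ∧ q ≠ p := by
  by_contra h; push_neg at h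
  have hsub : {u | A u v} ⊆ {p} := fun u hu => h u hu
  have := Set.ncard_le_ncard hsub (Set.toFinite _)
  rw [Set.ncard_singleton] at this
  rw [indeg] at h2; omega

lemma wf_above (hA : Acyclic A) : WellFounded (Relation.TransGen A) := by
  haveI : IsTrans V (Relation.TransGen A) := ⟨fun _ _ _ => Relation.TransGen.trans⟩
  haveI : IsIrrefl V (Relation.TransGen A) := ⟨hA⟩
  exact Finite.wellFounded_of_trans_of_irrefl _

lemma gamma_exists (hA : Acyclic A) (v : V) : ∃ g, isGamma A g v := by
  induction v using (wf_above hA).induction with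
  | _ v ih =>
    by_cases h1 : indeg A v = 1
    · obtain ⟨u, hu, _⟩ := parent_unique h1
      obtain ⟨g, hg⟩ := ih u (Relation.TransGen.single hu)
      exact ⟨g, hg.1, hg.2.tail ⟨hu, h1⟩⟩
    · exact ⟨v, h1, Relation.ReflTransGen.refl⟩

lemma gamma_unique (hA : Acyclic A) :
    ∀ v g g', isGamma A g v → isGamma A g' v → g = g' := by
  intro v
  induction v using (wf_above hA).induction with
  | _ v ih =>
    intro g g' hg hg'
    by_cases h1 : indeg A v = 1
    · obtain ⟨u, hu, huniq⟩ := parent_unique h1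
      have step : ∀ x, isGamma A x v → isGamma A x u := by
        intro x hx
        rcases (Relation.ReflTransGen.cases_tail hx.2) with rfl | ⟨c, hc, hcv⟩
        · exact absurd h1 hx.1
        · have : c = u := huniq c hcv.1
          exact ⟨hx.1, this ▸ hc⟩
      exact ih u (Relation.TransGen.single hu) g g' (step g hg) (step g' hg')
    · have eqv : ∀ x, isGamma A x v → x = v := by
        intro x hx
        rcases (Relation.ReflTransGen.cases_tail hx.2) with rfl | ⟨c, _, hcv⟩
        · rfl
        · exact absurd hcv.2 h1
      rw [eqv g hg, eqv g' hg']

noncomputable def gam (hA : Acyclic A) (v : V) : V := (gamma_exists hA v).choose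

lemma gam_spec (hA : Acyclic A) (v : V) : isGamma A (gam hA v) v := (gamma_exists hA v).choose_spec

lemma gam_eq (hA : Acyclic A) {g v : V} (h : isGamma A g v) : gam hA v = g :=
  gamma_unique hA v _ g (gam_spec hA v) h

lemma gam_of_ne_one (hA : Acyclic A) {v : V} (h : indeg A v ≠ 1) : gam hA v = v :=
  gam_eq hA ⟨h, Relation.ReflTransGen.refl⟩

lemma gam_step (hA : Acyclic A) {a b : V} (hab : A a b) (h1 : indeg A b = 1) :
    gam hA b = gam hA a :=
  gam_eq hA ⟨(gam_spec hA a).1, (gam_spec hA a).2.tail ⟨hab, h1⟩⟩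

end Helpers

section Back
variable {V : Type*} [Fintype V] {A : V → V → Prop} {X : Set V}

lemma hybrid_parent_colored {m : ℕ} (hA : Acyclic A) (σ : V → Fin m)
    (hsurj : ∀ c : Fin m, ∃ r, indeg A r = 0 ∧ σ r = c)
    (hC2 : ∀ u v, indeg A u = 0 → 2 ≤ indeg A v → σ u = σ v →
      Relation.ReflTransGen (fun a b => A a b ∧ (2 ≤ indeg A b → σ b = σ u)) u v)
    {h : V} (hh : 2 ≤ indeg A h) : ∃ p, A p h ∧ σ (gam hA p) = σ h := by
  obtain ⟨r, hr0, hrc⟩ := hsurj (σ h)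
  have hpath := hC2 r h hr0 hh hrc
  have inv : ∀ w, Relation.ReflTransGen (fun a b => A a b ∧ (2 ≤ indeg A b → σ b = σ r)) r w →
      σ (gam hA w) = σ r := by
    intro w hw
    induction hw with
    | refl => rw [gam_of_ne_one hA (by omega)]
    | @tail b c hwb hstep ih =>
      obtain ⟨hab, hcol⟩ := hstep
      by_cases h1 : indeg A c = 1
      · rw [gam_step hA hab h1]; exact ih
      · have h0 := indeg_pos_of_arc hab
        have h2c : 2 ≤ indeg A c := by omega
        rw [gam_of_ne_one hA h1, hcol h2c]
  have hrh : r ≠ h := by intro e; rw [e] at hr0; omega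
  rcases Relation.ReflTransGen.cases_tail hpath with e | ⟨p, hp, hstep⟩
  · exact absurd e.symm hrh
  · exact ⟨p, hstep.1, by rw [inv p hp, hrc]⟩

/-- The base forest constructed from a coloring. -/
def Fb (hA : Acyclic A) {m : ℕ} (σ : V → Fin m) : V → V → Prop :=
  fun a b => A a b ∧ (indeg A b = 1 ∨ (2 ≤ indeg A b ∧ σ (gam hA a) = σ b))

lemma backward {m : ℕ} (hnet : IsNetwork A X) (E : V → V → Prop) (hE : OmniExt A E)
    (σ : V → Fin m) (hprop : ∀ u v, E u v → σ u ≠ σ v)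
    (hbij : Set.BijOn σ {v | indeg A v = 0} Set.univ)
    (hC2 : ∀ u v, indeg A u = 0 → 2 ≤ indeg A v → σ u = σ v →
      Relation.ReflTransGen (fun a b => A a b ∧ (2 ≤ indeg A b → σ b = σ u)) u v) :
    ProperFB A X := by
  have hA := hnet.acyclic
  have hsurj : ∀ c : Fin m, ∃ r, indeg A r = 0 ∧ σ r = c := by
    intro c
    obtain ⟨r, hr, hrc⟩ := hbij.2.2 (Set.mem_univ c)
    exact ⟨r, hr, hrc⟩
  have hkey : ∀ h, 2 ≤ indeg A h → ∃ p, A p h ∧ σ (gam hA p) = σ h :=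
    fun h hh => hybrid_parent_colored hA σ hsurj hC2 hh
  have huniq : ∀ b, 2 ≤ indeg A b → ∀ p q, A p b → A q b →
      σ (gam hA p) = σ b → σ (gam hA q) = σ b → p = q := by
    intro b hb p q hpb hqb hcp hcq
    by_contra hpq
    have hG : GammaN A (gam hA p) (gam hA q) :=
      ⟨b, p, q, hb, hpb, hqb, hpq, gam_spec hA p, gam_spec hA q⟩
    exact hprop _ _ (hE.2.2.1 _ _ hG) (hcp.trans hcq.symm)
  -- every non-root has an Fb-parent
  have hFparent : ∀ b, indeg A b ≠ 0 → ∃ p, Fb hA σ p b := by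
    intro b hb
    by_cases h1 : indeg A b = 1
    · obtain ⟨p, hp, _⟩ := parent_unique h1
      exact ⟨p, hp, Or.inl h1⟩
    · have h2 : 2 ≤ indeg A b := by omega
      obtain ⟨p, hp, hcp⟩ := hkey b h2
      exact ⟨p, hp, Or.inr ⟨h2, hcp⟩⟩
  -- color invariant along Fb
  have hphi : ∀ a b, Fb hA σ a b → σ (gam hA a) = σ (gam hA b) := by
    rintro a b ⟨hab, hor⟩
    rcases hor with h1 | ⟨h2, hc⟩
    · rw [gam_step hA hab h1]
    · rw [gam_of_ne_one hA (show indeg A b ≠ 1 by omega), hc]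
  have hphiTree : ∀ a b, sameTree (Fb hA σ) a b → σ (gam hA a) = σ (gam hA b) := by
    intro a b hab
    induction hab with
    | refl => rfl
    | @tail x y hax hxy ih =>
      rcases hxy with h | h
      · rw [ih, hphi x y h]
      · rw [ih, ← hphi y x h]
  refine ⟨Fb hA σ, ⟨fun u v h => h.1, ⟨?_, ?_⟩, ?_, ?_⟩, ?_⟩
  · -- indeg ≤ 1
    intro b
    show ({u | Fb hA σ u b}).ncard ≤ 1
    by_cases h2 : 2 ≤ indeg A b
    · obtain ⟨p, hp, hcp⟩ := hkey b h2
      have hsub : {u | Fb hA σ u b} ⊆ {p} := by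
        rintro q ⟨hq, hor⟩
        rcases hor with e | ⟨_, hcq⟩
        · omega
        · exact huniq b h2 q p hq hp hcq hcp
      calc ({u | Fb hA σ u b}).ncard ≤ ({p} : Set V).ncard :=
            Set.ncard_le_ncard hsub (Set.toFinite _)
        _ = 1 := Set.ncard_singleton p
    · calc ({u | Fb hA σ u b}).ncard ≤ indeg A b :=
            Set.ncard_le_ncard (fun u hu => hu.1) (Set.toFinite _)
        _ ≤ 1 := by omega
  · -- acyclic
    intro v hv
    exact hA v (Relation.TransGen.mono (fun a b h => h.1) _ _ hv)
  · -- leaves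
    intro v
    constructor
    · intro h0
      rw [← (hnet.leaves v)]
      by_contra hout
      have hout' : outdeg A v ≠ 0 := hout
      have hempty : ∀ u, ¬ Fb hA σ v u := by
        intro u hu
        have : ({u | Fb hA σ v u}).ncard ≠ 0 := by
          rw [Ne, Set.ncard_eq_zero (Set.toFinite _), ← Ne, ← Set.nonempty_iff_ne_empty]
          exact ⟨u, hu⟩
        exact this h0
      obtain ⟨c0, hc0⟩ := (outdeg_ne_zero_iff v).mp hout'
      -- v is an omnian
      have homni : Omnian A v := by
        refine ⟨hout', fun c hc => ?_⟩
        have h0c := indeg_pos_of_arc hc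
        by_cases h1 : indeg A c = 1
        · exact absurd ⟨hc, Or.inl h1⟩ (hempty c)
        · omega
      obtain ⟨h, u, g, hvh, hh2, huh, huv, hgu, hEgh⟩ := hE.2.2.2 v homni
      have hgam : gam hA u = g := gam_eq hA hgu
      have hσg : σ g ≠ σ h := hprop g h hEgh
      obtain ⟨p, hp, hcp⟩ := hkey h hh2
      have hsemi := (hnet.semibinary h hh2).1
      have hpu : p ≠ u := by
        intro e; rw [e, hgam] at hcp; exact hσg hcp
      have : p = u ∨ p = v := parents_pair hsemi huh hvh huv p hp
      have hpv : p = v := by tauto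
      exact hempty h ⟨hvh, Or.inr ⟨hh2, by rw [← hpv]; exact hcp⟩⟩
    · intro hv
      have h0 : outdeg A v = 0 := (hnet.leaves v).mpr hv
      show ({u | Fb hA σ v u}).ncard = 0
      rw [Set.ncard_eq_zero (Set.toFinite _)]
      rw [outdeg, Set.ncard_eq_zero (Set.toFinite _)] at h0
      ext u; simp only [Set.mem_setOf_eq, Set.mem_empty_iff_false, iff_false]
      intro hu
      have : u ∈ ({w | A v w} : Set V) := hu.1
      rw [h0] at this; exact this
  · -- cross arcs
    intro u v hA_uv hnF hsame
    have h0 : indeg A v ≠ 0 := indeg_pos_of_arc hA_uv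
    have h1 : indeg A v ≠ 1 := by
      intro h1; exact hnF ⟨hA_uv, Or.inl h1⟩
    have h2 : 2 ≤ indeg A v := by omega
    have hc : σ (gam hA u) ≠ σ v := by
      intro hc; exact hnF ⟨hA_uv, Or.inr ⟨h2, hc⟩⟩
    have := hphiTree u v hsame
    rw [gam_of_ne_one hA h1] at this
    exact hc this
  · -- root counts
    have hset : {v | indeg (Fb hA σ) v = 0} = {v | indeg A v = 0} := by
      ext v
      simp only [Set.mem_setOf_eq]
      constructor
      · intro h
        by_contra hv
        obtain ⟨p, hp⟩ := hFparent v hv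
        have : ({u | Fb hA σ u v}).ncard ≠ 0 := by
          rw [Ne, Set.ncard_eq_zero (Set.toFinite _), ← Ne, ← Set.nonempty_iff_ne_empty]
          exact ⟨p, hp⟩
        exact this h
      · intro h
        have hsub : {u | Fb hA σ u v} ⊆ {u | A u v} := fun u hu => hu.1
        have := Set.ncard_le_ncard hsub (Set.toFinite _)
        rw [indeg] at h
        show ({u | Fb hA σ u v}).ncard = 0
        omega
    rw [hset]
end Back

section Forward
variable {V : Type*} [Fintype V] {F : V → V → Prop} {A : V → V → Prop} {X : Set V}

lemma forestRoot_exu (hF : IsForest F) (v : V) :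
    ∃! r, indeg F r = 0 ∧ Relation.ReflTransGen F r v := by
  induction v using (wf_above hF.2).induction with
  | _ v ih =>
    by_cases h0 : indeg F v = 0
    · refine ⟨v, ⟨h0, Relation.ReflTransGen.refl⟩, ?_⟩
      rintro r ⟨hr0, hrv⟩
      rcases Relation.ReflTransGen.cases_tail hrv with e | ⟨c, _, hcv⟩
      · exact e.symm
      · exact absurd h0 ((indeg_ne_zero_iff v).mpr ⟨c, hcv⟩)
    · obtain ⟨p, hp⟩ := (indeg_ne_zero_iff v).mp h0
      obtain ⟨r, ⟨hr0, hrp⟩, hru⟩ := ih p (Relation.TransGen.single hp)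
      refine ⟨r, ⟨hr0, hrp.tail hp⟩, ?_⟩
      rintro r' ⟨hr'0, hr'v⟩
      rcases Relation.ReflTransGen.cases_tail hr'v with e | ⟨c, hc, hcv⟩
      · rw [← e] at hr'0; exact absurd hr'0 h0
      · have hcp : c = p := le_one_unique (hF.1 v) hcv hp
        exact hru r' ⟨hr'0, hcp ▸ hc⟩

noncomputable def rho (hF : IsForest F) (v : V) : V := (forestRoot_exu hF v).exists.choose

lemma rho_spec (hF : IsForest F) (v : V) :
    indeg F (rho hF v) = 0 ∧ Relation.ReflTransGen F (rho hF v) v :=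
  (forestRoot_exu hF v).exists.choose_spec

lemma rho_eq (hF : IsForest F) {r v : V} (h0 : indeg F r = 0)
    (hp : Relation.ReflTransGen F r v) : rho hF v = r := by
  obtain ⟨r', hr', huniq⟩ := forestRoot_exu hF v
  rw [huniq _ (rho_spec hF v), huniq _ ⟨h0, hp⟩]

lemma rho_root (hF : IsForest F) {v : V} (h0 : indeg F v = 0) : rho hF v = v :=
  rho_eq hF h0 Relation.ReflTransGen.refl

lemma rho_step (hF : IsForest F) {a b : V} (hab : F a b) : rho hF b = rho hF a :=
  rho_eq hF (rho_spec hF a).1 ((rho_spec hF a).2.tail hab)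

lemma rho_sameTree (hF : IsForest F) {a b : V} (h : sameTree F a b) :
    rho hF a = rho hF b := by
  induction h with
  | refl => rfl
  | @tail x y hax hxy ih =>
    rcases hxy with h | h
    · rw [ih, rho_step hF h]
    · rw [ih, ← rho_step hF h]

lemma sameTree_of_rho (hF : IsForest F) {a b : V} (h : rho hF a = rho hF b) :
    sameTree F a b := by
  have h1 : sameTree F (rho hF a) a := Relation.ReflTransGen.mono (fun x y h => Or.inl h) _ _ (rho_spec hF a).2
  have h2 : sameTree F (rho hF b) b := Relation.ReflTransGen.mono (fun x y h => Or.inl h) _ _ (rho_spec hF b).2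
  have hsymm : Symmetric (sameTree F) :=
    fun x y h => (@Relation.ReflTransGen.stdSymm _ _ ⟨fun x y h => Or.symm h⟩).symm x y h
  exact Relation.ReflTransGen.trans (hsymm h1) (h ▸ h2)

lemma forward {m : ℕ} (hnet : IsNetwork A X)
    (hroots : {v | indeg A v = 0}.ncard = m)
    (hS : SubdivForest A F X)
    (hcount : {v | indeg F v = 0}.ncard = {v | indeg A v = 0}.ncard) :
    ∃ E : V → V → Prop, OmniExt A E ∧
      ∃ σ : V → Fin m,
        (∀ u v, E u v → σ u ≠ σ v) ∧
        Set.BijOn σ {v | indeg A v = 0} Set.univ ∧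
        (∀ u v, indeg A u = 0 → 2 ≤ indeg A v → σ u = σ v →
          Relation.ReflTransGen
            (fun a b => A a b ∧ (2 ≤ indeg A b → σ b = σ u)) u v) := by
  have hA := hnet.acyclic
  obtain ⟨hFA, hF, hleaf, hcross⟩ := hS
  -- A-roots = F-roots
  have hrootsets : {v | indeg A v = 0} = {v | indeg F v = 0} := by
    refine Set.eq_of_subset_of_ncard_le ?_ (le_of_eq hcount) (Set.toFinite _)
    intro v hv
    have hsub : {u | F u v} ⊆ {u | A u v} := fun u hu => hFA u v hu
    have := Set.ncard_le_ncard hsub (Set.toFinite _)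
    simp only [Set.mem_setOf_eq] at hv ⊢
    rw [indeg] at hv; rw [indeg]; omega
  have htree_arc : ∀ a b, A a b → indeg A b = 1 → F a b := by
    intro a b hab h1
    by_contra hnF
    obtain ⟨p, hp, hpu⟩ := parent_unique h1
    have hpa : p = a := (hpu a hab).symm
    have hFb : indeg F b = 0 := by
      rw [indeg, Set.ncard_eq_zero (Set.toFinite _)]
      ext u; simp only [Set.mem_setOf_eq, Set.mem_empty_iff_false, iff_false]
      intro hu
      have : u = p := hpu u (hFA u b hu)
      rw [this, hpa] at hu; exact hnF hu
    have : b ∈ {v | indeg A v = 0} := by rw [hrootsets]; exact hFb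
    simp only [Set.mem_setOf_eq] at this; omega
  have hrho_gam : ∀ g v, isGamma A g v → rho hF v = rho hF g := by
    intro g v hg
    have : ∀ w, Relation.ReflTransGen (fun a b => A a b ∧ indeg A b = 1) g w →
        rho hF w = rho hF g := by
      intro w hw
      induction hw with
      | refl => rfl
      | @tail x y hgx hxy ih => rw [rho_step hF (htree_arc x y hxy.1 hxy.2), ih]
    exact this v hg.2
  have hhyb_par : ∀ b, 2 ≤ indeg A b → ∃ p, F p b := by
    intro b h2
    have : indeg F b ≠ 0 := by
      intro h0
      have : b ∈ {v | indeg A v = 0} := by rw [hrootsets]; exact h0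
      simp only [Set.mem_setOf_eq] at this; omega
    exact (indeg_ne_zero_iff b).mp this
  have hrho_mem : ∀ v, rho hF v ∈ {v | indeg A v = 0} := by
    intro v; rw [hrootsets]; exact (rho_spec hF v).1
  -- the coloring
  have hfin : ({v | indeg A v = 0} : Set V).Finite := Set.toFinite _
  have hcard : hfin.toFinset.card = m := by
    rw [← Set.ncard_eq_toFinset_card _ hfin]; exact hroots
  let e := hfin.toFinset.equivFinOfCardEq hcard
  let σ : V → Fin m := fun v => e ⟨rho hF v, hfin.mem_toFinset.mpr (hrho_mem v)⟩
  have hσ_iff : ∀ u v, σ u = σ v ↔ rho hF u = rho hF v := by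
    intro u v
    constructor
    · intro h
      have := e.injective h
      exact congrArg Subtype.val this
    · intro h
      show e _ = e _
      congr 1
      exact Subtype.ext h
  refine ⟨fun u v => indeg A u ≠ 1 ∧ indeg A v ≠ 1 ∧ rho hF u ≠ rho hF v, ?_, σ, ?_, ?_, ?_⟩
  · -- OmniExt
    refine ⟨fun u v h => ⟨h.2.1, h.1, h.2.2.symm⟩, fun u v h => ⟨h.1, h.2.1⟩, ?_, ?_⟩
    · -- Gamma ⊆ E
      rintro u v ⟨h, u', v', hh2, hu'h, hv'h, huv', hgu, hgv⟩
      have hsemi := (hnet.semibinary h hh2).1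
      obtain ⟨p, hpF⟩ := hhyb_par h hh2
      have hpA : A p h := hFA p h hpF
      have hp_mem : p = u' ∨ p = v' := parents_pair hsemi hu'h hv'h huv' p hpA
      have hru : rho hF u = rho hF u' := (hrho_gam u u' hgu).symm
      have hrv : rho hF v = rho hF v' := (hrho_gam v v' hgv).symm
      refine ⟨hgu.1, hgv.1, ?_⟩
      rcases hp_mem with rfl | rfl
      · -- p = u', so v' → h not in F
        have hnF : ¬ F v' h := by
          intro hc
          exact huv' (le_one_unique (hF.1 h) hpF hc)
        have hns := hcross v' h hv'h hnF
        intro hc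
        apply hns
        apply sameTree_of_rho hF
        rw [← hrv, ← hc, hru, ← rho_step hF hpF]
      · -- p = v', so u' → h not in F
        have hnF : ¬ F u' h := by
          intro hc
          exact huv' (le_one_unique (hF.1 h) hc hpF)
        have hns := hcross u' h hu'h hnF
        intro hc
        apply hns
        apply sameTree_of_rho hF
        rw [← hru, hc, hrv, ← rho_step hF hpF]
    · -- omnian condition
      rintro v ⟨hout, hch⟩
      have hvX : v ∉ X := fun hx => hout ((hnet.leaves v).mpr hx)
      have hFout : outdeg F v ≠ 0 := fun h0 => hvX ((hleaf v).mp h0)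
      obtain ⟨h, hFvh⟩ := (outdeg_ne_zero_iff v).mp hFout
      have hAvh : A v h := hFA v h hFvh
      have hh2 : 2 ≤ indeg A h := hch h hAvh
      obtain ⟨u, huh, huv⟩ := exists_other_parent hh2 hAvh
      refine ⟨h, u, gam hA u, hAvh, hh2, huh, huv, gam_spec hA u, ?_⟩
      have hnF : ¬ F u h := by
        intro hc
        exact huv (le_one_unique (hF.1 h) hc hFvh)
      have hns := hcross u h huh hnF
      refine ⟨(gam_spec hA u).1, by omega, ?_⟩
      intro hc
      apply hns
      apply sameTree_of_rho hF
      rw [hrho_gam _ _ (gam_spec hA u), hc]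
  · -- proper coloring
    rintro u v ⟨_, _, hne⟩ hc
    exact hne ((hσ_iff u v).mp hc)
  · -- BijOn
    have hrho_id : ∀ v ∈ {v | indeg A v = 0}, rho hF v = v := by
      intro v hv
      rw [hrootsets] at hv
      exact rho_root hF hv
    refine ⟨fun v _ => Set.mem_univ _, ?_, ?_⟩
    · intro u hu v hv hc
      have := (hσ_iff u v).mp hc
      rw [hrho_id u hu, hrho_id v hv] at this; exact this
    · intro c _
      obtain ⟨⟨x, hx⟩, hex⟩ := e.surjective c
      have hxmem : x ∈ {v | indeg A v = 0} := hfin.mem_toFinset.mp hx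
      refine ⟨x, hxmem, ?_⟩
      show e _ = c
      rw [← hex]
      congr 1
      exact Subtype.ext (hrho_id x hxmem)
  · -- C2
    intro u v hu0 hv2 hc
    have huF : indeg F u = 0 := by
      have : u ∈ {v | indeg F v = 0} := hrootsets ▸ hu0
      exact this
    have hrho_u : rho hF u = u := rho_root hF huF
    have hrv : rho hF v = u := by
      have := (hσ_iff u v).mp hc
      rw [hrho_u] at this; exact this.symm
    have hpath : Relation.ReflTransGen F u v := by
      have := (rho_spec hF v).2
      rw [hrv] at this; exact this
    have hgen : ∀ w, Relation.ReflTransGen F u w →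
        Relation.ReflTransGen (fun a b => A a b ∧ (2 ≤ indeg A b → σ b = σ u)) u w := by
      intro w hw
      induction hw with
      | refl => exact Relation.ReflTransGen.refl
      | @tail x y hux hxy ih =>
        refine ih.tail ⟨hFA x y hxy, fun _ => ?_⟩
        have hry : rho hF y = u := rho_eq hF huF (Relation.ReflTransGen.tail hux hxy)
        apply (hσ_iff y u).mpr
        rw [hry, hrho_u]
    exact hgen v hpath

end Forward


/-- an `m`-rooted network (`m ≥ 2`) is proper forest-based iff some
omni-extension of `Γ(N)` has a proper vertex coloring `σ` with `m` colors such that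
(C1) `σ` restricted to the roots is a bijection onto the colors, and (C2) whenever a
root `u` and hybrid vertex `v` get the same color, there is a directed path from `u`
to `v` all of whose hybrid vertices are colored `σ u`. -/
theorem stmt13 {V : Type*} [Fintype V] (A : V → V → Prop) (X : Set V) (m : ℕ)
    (hm : 2 ≤ m) (hnet : IsNetwork A X)
    (hroots : {v | indeg A v = 0}.ncard = m) :
    ProperFB A X ↔
      ∃ E : V → V → Prop, OmniExt A E ∧
        ∃ σ : V → Fin m,
          (∀ u v, E u v → σ u ≠ σ v) ∧
          Set.BijOn σ {v | indeg A v = 0} Set.univ ∧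
          (∀ u v, indeg A u = 0 → 2 ≤ indeg A v → σ u = σ v →
            Relation.ReflTransGen
              (fun a b => A a b ∧ (2 ≤ indeg A b → σ b = σ u)) u v) := by
  constructor
  · rintro ⟨F, hS, hcount⟩
    exact forward hnet hroots hS hcount
  · rintro ⟨E, hE, σ, hprop, hbij, hC2⟩
    exact backward hnet E hE σ hprop hbij hC2
end

section
/- Let N be an m-rooted network on X (m ≥ 2) that is forest-based. If |X| = m then every base forest of N is proper (has exactly m component trees), and hence N is proper forest-based; if |X| > m then N has a base forest that is not proper. -/
open Classical

section auxlemmas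
variable {V : Type*} [Fintype V] {A F : V → V → Prop}

lemma outdeg_eq_zero_iff' (F : V → V → Prop) (v : V) :
    outdeg F v = 0 ↔ ∀ u, ¬ F v u := by
  rw [outdeg, Set.ncard_eq_zero (Set.toFinite _), Set.eq_empty_iff_forall_notMem]
  rfl

lemma indeg_eq_zero_iff' (F : V → V → Prop) (v : V) :
    indeg F v = 0 ↔ ∀ u, ¬ F u v := by
  rw [indeg, Set.ncard_eq_zero (Set.toFinite _), Set.eq_empty_iff_forall_notMem]
  rfl

lemma pred_unique (h : ∀ v, indeg F v ≤ 1) {a b c : V} (ha : F a c) (hb : F b c) : a = b :=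
  (Set.ncard_le_one (Set.toFinite {u | F u c})).mp (h c) a ha b hb

lemma exists_leaf (hac : Acyclic F) (v : V) :
    ∃ l, Relation.ReflTransGen F v l ∧ outdeg F l = 0 := by
  have hwf : WellFounded (fun a b : V => Relation.TransGen F b a) := by
    haveI : IsTrans V (fun a b : V => Relation.TransGen F b a) :=
      ⟨fun a b c h1 h2 => h2.trans h1⟩
    haveI : IsIrrefl V (fun a b : V => Relation.TransGen F b a) := ⟨fun a h => hac a h⟩
    exact Finite.wellFounded_of_trans_of_irrefl _
  induction v using hwf.induction with
  | _ v ih =>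
    by_cases h0 : outdeg F v = 0
    · exact ⟨v, .refl, h0⟩
    · have : ∃ u, F v u := by
        by_contra h; push_neg at h
        exact h0 ((outdeg_eq_zero_iff' F v).mpr h)
      obtain ⟨u, hu⟩ := this
      obtain ⟨l, hl, h0⟩ := ih u (Relation.TransGen.single hu)
      exact ⟨l, .head hu hl, h0⟩

lemma ancestors_comparable (h1 : ∀ v, indeg F v ≤ 1) {a b c : V}
    (hac : Relation.ReflTransGen F a c) (hbc : Relation.ReflTransGen F b c) :
    Relation.ReflTransGen F a b ∨ Relation.ReflTransGen F b a := by
  induction hac using Relation.ReflTransGen.head_induction_on with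
  | refl => exact Or.inr hbc
  | head hstep _ ih =>
    rename_i x y _
    rcases ih with h | h
    · exact Or.inl (.head hstep h)
    · rcases h.cases_tail with rfl | ⟨p, hbp, hpy⟩
      · exact Or.inl (.single hstep)
      · rw [pred_unique h1 hpy hstep] at hbp
        exact Or.inr hbp

lemma path_comparable (h1 : ∀ v, indeg F v ≤ 1)
    (hout : ∀ a b c, F a b → F a c → b = c) {u v : V}
    (h : sameTree F u v) :
    Relation.ReflTransGen F u v ∨ Relation.ReflTransGen F v u := by
  induction h with
  | refl => exact Or.inl .refl
  | tail _ hstep ih =>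
    rename_i b c _
    rcases hstep with hbc | hcb
    · rcases ih with h | h
      · exact Or.inl (h.tail hbc)
      · rcases h.cases_head with rfl | ⟨d, hbd, hdu⟩
        · exact Or.inl (.single hbc)
        · rw [hout b d c hbd hbc] at hdu
          exact Or.inr hdu
    · rcases ih with h | h
      · rcases h.cases_tail with rfl | ⟨p, hup, hpb⟩
        · exact Or.inr (.single hcb)
        · rw [pred_unique h1 hpb hcb] at hup
          exact Or.inl hup
      · exact Or.inr (.head hcb h)

lemma root_reach_eq (h1 : ∀ v, indeg F v ≤ 1) {a b : V}
    (hb : indeg F b = 0) (hab : Relation.ReflTransGen F a b) : a = b := by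
  rcases hab.cases_tail with rfl | ⟨p, _, hpb⟩
  · rfl
  · exact absurd hpb ((indeg_eq_zero_iff' F b).mp hb p)

end auxlemmas

/-- let `N` be a forest-based `m`-rooted network (`m ≥ 2`). The number
of component trees of a base forest equals the number of roots of the corresponding
subdivision forest. If `|X| = m` then every base forest is proper (has exactly `m`
trees) and `N` is proper forest-based; if `|X| > m` then some base forest of `N` is
not proper. -/

theorem stmt17 {V : Type*} [Fintype V] (A : V → V → Prop) (X : Set V) (m : ℕ)
    (hm : 2 ≤ m) (hnet : IsNetwork A X)
    (hroots : {v | indeg A v = 0}.ncard = m) (hfb : ForestBased A X) :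
    (X.ncard = m →
      (∀ F : V → V → Prop, SubdivForest A F X → {v | indeg F v = 0}.ncard = m) ∧
        ∃ F : V → V → Prop, SubdivForest A F X ∧ {v | indeg F v = 0}.ncard = m) ∧
    (m < X.ncard →
      ∃ F : V → V → Prop, SubdivForest A F X ∧ {v | indeg F v = 0}.ncard ≠ m) := by
  constructor
  · intro hXm
    have hall : ∀ F : V → V → Prop, SubdivForest A F X → {v | indeg F v = 0}.ncard = m := by
      intro F hF
      obtain ⟨hFA, ⟨hind, hacF⟩, hleafF, _⟩ := hF
      -- lower bound: roots of A are roots of F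
      have hlow : m ≤ {v | indeg F v = 0}.ncard := by
        rw [← hroots]
        refine Set.ncard_le_ncard ?_ (Set.toFinite _)
        intro v hv
        have := (indeg_eq_zero_iff' A v).mp hv
        exact (indeg_eq_zero_iff' F v).mpr fun u hu => this u (hFA u v hu)
      -- upper bound: injection from roots to leaves
      have hup : {v | indeg F v = 0}.ncard ≤ X.ncard := by
        set g : V → V := fun r => (exists_leaf hacF r).choose with hg
        have hreach : ∀ r, Relation.ReflTransGen F r (g r) := fun r =>
          (exists_leaf hacF r).choose_spec.1
        have hleaf : ∀ r, g r ∈ X := fun r =>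
          (hleafF _).mp (exists_leaf hacF r).choose_spec.2
        refine Set.ncard_le_ncard_of_injOn g (fun r _ => hleaf r) ?_ (Set.toFinite _)
        intro r1 h1' r2 h2' heq
        rcases ancestors_comparable hind (hreach r1) (heq ▸ hreach r2) with h | h
        · exact root_reach_eq hind h2' h
        · exact (root_reach_eq hind h1' h).symm
      omega
    refine ⟨hall, ?_⟩
    obtain ⟨F, hF⟩ := hfb
    exact ⟨F, hF, hall F hF⟩
  · intro hXm
    obtain ⟨F, hFA, ⟨hind, hacF⟩, hleafF, hcond⟩ := hfb
    -- the pruned (functional) forest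
    set F' : V → V → Prop := fun u v => ∃ h : {w | F u w}.Nonempty, v = h.some with hF'
    have hsub : ∀ u v, F' u v → F u v := by
      rintro u v ⟨h, rfl⟩; exact h.some_mem
    have hfun : ∀ a b c, F' a b → F' a c → b = c := by
      rintro a b c ⟨h, rfl⟩ ⟨h', rfl⟩; rfl
    have hind' : ∀ v, indeg F' v ≤ 1 := by
      intro v
      refine le_trans (Set.ncard_le_ncard (fun u hu => hsub u v hu) (Set.toFinite _)) (hind v)
    have hac' : Acyclic F' := fun v hv => hacF v (Relation.TransGen.mono hsub _ _ hv)
    have hleaf' : ∀ v, outdeg F' v = 0 ↔ v ∈ X := by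
      intro v
      rw [← hleafF v]
      rw [outdeg_eq_zero_iff', outdeg_eq_zero_iff']
      constructor
      · intro h u hu
        by_cases hne : {w | F v w}.Nonempty
        · exact h hne.some ⟨hne, rfl⟩
        · exact hne ⟨u, hu⟩
      · rintro h u ⟨hne, rfl⟩
        exact h _ hne.some_mem
    have hst' : ∀ u v, sameTree F' u v → sameTree F u v := fun u v h =>
      Relation.ReflTransGen.mono (fun a b hab => hab.imp (hsub a b) (hsub b a)) _ _ h
    have hcond' : ∀ u v, A u v → ¬ F' u v → ¬ sameTree F' u v := by
      intro u v hA hnF' hst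
      by_cases hFuv : F u v
      · rcases path_comparable hind' hfun hst with h | h
        · rcases h.cases_tail with heq | ⟨p, _, hpv⟩
          · exact hnet.acyclic u (.single (heq ▸ hA))
          · have hpu : p = u := pred_unique hind (hsub p v hpv) hFuv
            exact hnF' (hpu ▸ hpv)
        · exact hnet.acyclic u (Relation.TransGen.head' hA (Relation.ReflTransGen.mono (fun a b hab => hFA a b (hsub a b hab)) _ _ h))
      · exact hcond u v hA hFuv (hst' u v hst)
    refine ⟨F', ⟨fun u v h => hFA u v (hsub u v h), ⟨hind', hac'⟩, hleaf', hcond'⟩, ?_⟩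
    -- count roots of F'
    set g : V → V := fun u => if h : {w | F u w}.Nonempty then h.some else u with hg
    have hgF' : ∀ u, u ∉ X → F' u (g u) := by
      intro u hu
      have hne : {w | F u w}.Nonempty := by
        rcases Set.eq_empty_or_nonempty {w | F u w} with he | hne
        · exact absurd ((hleafF u).mp (by rw [outdeg, he, Set.ncard_empty])) hu
        · exact hne
      exact ⟨hne, by simp [hg, hne]⟩
    have himg : g '' Xᶜ = {v | indeg F' v ≠ 0} := by
      ext v
      constructor
      · rintro ⟨u, hu, rfl⟩
        intro h0
        exact (indeg_eq_zero_iff' F' (g u)).mp h0 u (hgF' u hu)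
      · intro hv
        have : ∃ u, F' u v := by
          by_contra h; push_neg at h
          exact hv ((indeg_eq_zero_iff' F' v).mpr h)
        obtain ⟨u, hu⟩ := this
        obtain ⟨hne, rfl⟩ := hu
        have huX : u ∉ X := by
          intro huX
          exact (outdeg_eq_zero_iff' F u).mp ((hleafF u).mpr huX) _ hne.some_mem
        exact ⟨u, huX, by simp [hg, hne]⟩
    have hinj : Set.InjOn g Xᶜ := by
      intro u hu u' hu' heq
      exact pred_unique hind (hsub u (g u) (hgF' u hu)) (heq ▸ hsub u' (g u') (hgF' u' hu'))
    have hcount : {v | indeg F' v ≠ 0}.ncard = Xᶜ.ncard := by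
      rw [← himg, Set.ncard_image_of_injOn hinj]
    have hcompl : {v | indeg F' v = 0}ᶜ = {v | indeg F' v ≠ 0} := by
      ext v; simp
    have e1 := Set.ncard_add_ncard_compl {v | indeg F' v = 0}
    have e2 := Set.ncard_add_ncard_compl X
    rw [hcompl, hcount] at e1
    omega
end
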